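/- Let B = T(V)/I be an augmented graded algebra, where V is a vector space and I ⊆ ⊕_{n≥2} V^{⊗n} is a homogeneous ideal. Then the kernel M(B) of the multiplication map B⁺ ⊗_B B⁺ → B⁺ (where B⁺ is the augmentation ideal and B⁺ ⊗_B B⁺ = (B⁺ ⊗ B⁺)/Im(m⊗1 − 1⊗m)) is isomorphic to I/(T(V)⁺·I + I·T(V)⁺). -/

import Mathlib

open TensorProduct TensorAlgebra LinearMap

set_option maxHeartbeats 4000000
set_option synthInstance.maxHeartbeats 400000

abbrev auxSubmoduleACG {K A : Type*} [Field K] [Ring A] [Algebra K A] (p : Submodule K A) :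
    AddCommGroup ↥p := Submodule.addCommGroup p

abbrev auxSubmoduleTAACG {K V : Type*} [Field K] [AddCommGroup V] [Module K V]
    (p : Submodule K (TensorAlgebra K V)) : AddCommGroup ↥p := Submodule.addCommGroup p

noncomputable section MBAux

attribute [local instance] auxSubmoduleACG auxSubmoduleTAACG

variable (K V : Type*) [Field K] [AddCommGroup V] [Module K V]

local notation "TA" => TensorAlgebra K V

/-- The augmentation ideal of the tensor algebra. -/
def auxTp : Submodule K TA :=
  LinearMap.ker (TensorAlgebra.algebraMapInv : TA →ₐ[K] K).toLinearMap

variable {K V}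

lemma mem_auxTp {x : TA} : x ∈ auxTp K V ↔ algebraMapInv (M := V) x = 0 := Iff.rfl

lemma auxTp_mul_mem {x : TA} (y : TA) (hx : x ∈ auxTp K V) : x * y ∈ auxTp K V := by
  rw [mem_auxTp] at *
  rw [map_mul, hx, zero_mul]

lemma auxTp_mul_mem' (x : TA) {y : TA} (hy : y ∈ auxTp K V) : x * y ∈ auxTp K V := by
  rw [mem_auxTp] at *
  rw [map_mul, hy, mul_zero]

lemma ι_mem_auxTp (v : V) : ι K v ∈ auxTp K V := by
  rw [mem_auxTp, algebraMapInv, lift_ι_apply]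
  rfl

lemma algebraMapInv_algebraMap (c : K) :
    (algebraMapInv : TA →ₐ[K] K) (algebraMap K TA c) = c :=
  TensorAlgebra.algebraMap_leftInverse V c

variable (K V)

/-- Projection of the tensor algebra onto its augmentation ideal. -/
def auxPr : TA →ₗ[K] ↥(auxTp K V) :=
  LinearMap.codRestrict _
    (LinearMap.id - (Algebra.linearMap K TA ∘ₗ (algebraMapInv : TA →ₐ[K] K).toLinearMap))
    (fun x => by
      rw [mem_auxTp]
      simp [algebraMapInv_algebraMap])

variable {K V}

lemma auxPr_apply (x : TA) :
    (auxPr K V x : TA) = x - algebraMap K TA (algebraMapInv (M := V) x) := rfl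

lemma auxPr_mem {x : TA} (h : x ∈ auxTp K V) : auxPr K V x = ⟨x, h⟩ := by
  apply Subtype.ext
  rw [auxPr_apply, mem_auxTp.mp h, map_zero, sub_zero]

variable (K V)

/-- right multiplication on the second factor of `T⁺ ⊗ T`. -/
def auxOp (y : TA) : (↥(auxTp K V) ⊗[K] TA) →ₗ[K] (↥(auxTp K V) ⊗[K] TA) :=
  LinearMap.lTensor _ (LinearMap.mulRight K y)

variable {K V}

@[simp] lemma auxOp_tmul (y : TA) (a : ↥(auxTp K V)) (t : TA) :
    auxOp K V y (a ⊗ₜ[K] t) = a ⊗ₜ[K] (t * y) := rfl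

lemma auxOp_one (m : ↥(auxTp K V) ⊗[K] TA) : auxOp K V (1 : TA) m = m := by
  have : auxOp K V (1 : TA) = LinearMap.id := by
    apply TensorProduct.ext'
    intro a t
    simp
  rw [this, LinearMap.id_apply]

lemma auxOp_op (y z : TA) (m : ↥(auxTp K V) ⊗[K] TA) :
    auxOp K V z (auxOp K V y m) = auxOp K V (y * z) m := by
  have : (auxOp K V z) ∘ₗ (auxOp K V y) = auxOp K V (y * z) := by
    apply TensorProduct.ext'
    intro a t
    simp [mul_assoc]
  exact LinearMap.congr_fun this m

variable (K V)

/-- generator of the representation of `T` on `T × (T⁺ ⊗ T)`. -/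
def auxF : V →ₗ[K] Module.End K (TA × (↥(auxTp K V) ⊗[K] TA)) where
  toFun v := LinearMap.prod
    ((LinearMap.mulLeft K (ι K v)) ∘ₗ LinearMap.fst K TA _)
    ((TensorProduct.mk K ↥(auxTp K V) TA ⟨ι K v, ι_mem_auxTp v⟩) ∘ₗ LinearMap.fst K TA _)
  map_add' v w := by
    refine LinearMap.ext fun p => ?_
    refine Prod.ext ?_ ?_
    · simp [add_mul]
    · show (⟨ι K (v + w), _⟩ : ↥(auxTp K V)) ⊗ₜ[K] p.1
          = (⟨ι K v, ι_mem_auxTp v⟩ : ↥(auxTp K V)) ⊗ₜ[K] p.1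
            + (⟨ι K w, ι_mem_auxTp w⟩ : ↥(auxTp K V)) ⊗ₜ[K] p.1
      have : (⟨ι K (v + w), ι_mem_auxTp (v + w)⟩ : ↥(auxTp K V))
          = ⟨ι K v, ι_mem_auxTp v⟩ + ⟨ι K w, ι_mem_auxTp w⟩ := by
        apply Subtype.ext; simp
      rw [this, TensorProduct.add_tmul]
  map_smul' c v := by
    refine LinearMap.ext fun p => ?_
    refine Prod.ext ?_ ?_
    · simp
    · show (⟨ι K (c • v), _⟩ : ↥(auxTp K V)) ⊗ₜ[K] p.1
          = c • ((⟨ι K v, ι_mem_auxTp v⟩ : ↥(auxTp K V)) ⊗ₜ[K] p.1)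
      have : (⟨ι K (c • v), ι_mem_auxTp (c • v)⟩ : ↥(auxTp K V))
          = c • ⟨ι K v, ι_mem_auxTp v⟩ := by
        apply Subtype.ext; simp
      rw [this, TensorProduct.smul_tmul']

@[simp] lemma auxF_apply (v : V) (y : TA) (n : ↥(auxTp K V) ⊗[K] TA) :
    auxF K V v (y, n) = (ι K v * y, (⟨ι K v, ι_mem_auxTp v⟩ : ↥(auxTp K V)) ⊗ₜ[K] y) := rfl

/-- The representation. -/
def auxTheta : TA →ₐ[K] Module.End K (TA × (↥(auxTp K V) ⊗[K] TA)) :=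
  TensorAlgebra.lift K (auxF K V)

/-- The deconcatenation operator `D`. -/
def auxD : TA →ₗ[K] (↥(auxTp K V) ⊗[K] TA) where
  toFun x := (auxTheta K V x ((1 : TA), (0 : ↥(auxTp K V) ⊗[K] TA))).2
  map_add' x y := by
    show (auxTheta K V (x + y) ((1 : TA), (0 : ↥(auxTp K V) ⊗[K] TA))).2 = _
    rw [map_add, LinearMap.add_apply]
    rfl
  map_smul' c x := by
    show (auxTheta K V (c • x) ((1 : TA), (0 : ↥(auxTp K V) ⊗[K] TA))).2 = _
    rw [map_smul, LinearMap.smul_apply]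
    rfl

variable {K V}

lemma auxTheta_apply (x : TA) : ∀ (y : TA) (n : ↥(auxTp K V) ⊗[K] TA),
    auxTheta K V x (y, n) =
      (x * y, algebraMapInv (M := V) x • n + auxOp K V y (auxD K V x)) := by
  have hD : ∀ z : TA, auxD K V z = (auxTheta K V z ((1 : TA), (0 : ↥(auxTp K V) ⊗[K] TA))).2 :=
    fun _ => rfl
  induction x using TensorAlgebra.induction with
  | algebraMap r =>
    intro y n
    rw [AlgHom.commutes, hD, AlgHom.commutes]
    simp only [Module.algebraMap_end_apply, Prod.smul_mk, smul_zero, map_zero,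
      algebraMapInv_algebraMap]
    refine Prod.ext ?_ ?_
    · simp [Algebra.smul_def]
    · simp

  | ι v =>
    intro y n
    rw [show auxTheta K V (ι K v) = auxF K V v from TensorAlgebra.lift_ι_apply _ _,
      hD, show auxTheta K V (ι K v) = auxF K V v from TensorAlgebra.lift_ι_apply _ _]
    simp only [auxF_apply]
    rw [show (algebraMapInv : TA →ₐ[K] K) (ι K v) = 0 from ι_mem_auxTp v]
    simp
  | mul a b ha hb =>
    have hDab : auxD K V (a * b)
        = algebraMapInv (M := V) a • auxD K V b + auxOp K V b (auxD K V a) := by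
      rw [hD, map_mul, Module.End.mul_apply, hb, ha]
      simp only [mul_one, smul_zero, zero_add, auxOp_one]
    intro y n
    rw [map_mul, Module.End.mul_apply, hb y n, ha (b * y) _]
    refine Prod.ext ?_ ?_
    · exact (mul_assoc a b y).symm
    · show algebraMapInv (M := V) a • (algebraMapInv (M := V) b • n + auxOp K V y (auxD K V b))
        + auxOp K V (b * y) (auxD K V a) = _
      rw [hDab, map_mul, map_add, map_smul, smul_add, smul_smul, ← auxOp_op b y (auxD K V a)]
      show _ = _ • n + (_ • auxOp K V y (auxD K V b) + auxOp K V y ((auxOp K V b) (auxD K V a)))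
      abel
  | add a b ha hb =>
    intro y n
    have hDadd : auxD K V (a + b) = auxD K V a + auxD K V b := map_add _ _ _
    rw [map_add, LinearMap.add_apply, ha y n, hb y n, hDadd, Prod.mk_add_mk]
    refine Prod.ext ?_ ?_
    · simp [add_mul]
    · show _ = algebraMapInv (M := V) (a + b) • n + auxOp K V y (auxD K V a + auxD K V b)
      rw [map_add, map_add, add_smul]
      abel

lemma auxD_mul (a b : TA) :
    auxD K V (a * b) = algebraMapInv (M := V) a • auxD K V b + auxOp K V b (auxD K V a) := by
  have : auxD K V (a * b) = (auxTheta K V (a * b) ((1 : TA), 0)).2 := rfl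
  rw [this, map_mul, Module.End.mul_apply, auxTheta_apply b, auxTheta_apply a]
  simp only [mul_one, smul_zero, zero_add, auxOp_one]

lemma auxD_ι (v : V) :
    auxD K V (ι K v) = (⟨ι K v, ι_mem_auxTp v⟩ : ↥(auxTp K V)) ⊗ₜ[K] (1 : TA) := by
  have : auxD K V (ι K v) = (auxTheta K V (ι K v) ((1 : TA), 0)).2 := rfl
  rw [this, show auxTheta K V (ι K v) = auxF K V v from TensorAlgebra.lift_ι_apply _ _]
  rfl



lemma auxPow_le_Tp (n : ℕ) (hn : n ≠ 0) :
    (LinearMap.range (ι K : V →ₗ[K] TA)) ^ n ≤ auxTp K V := by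
  obtain ⟨m, rfl⟩ := Nat.exists_eq_succ_of_ne_zero hn
  rw [pow_succ]
  refine Submodule.mul_le.mpr fun x _ y hy => ?_
  obtain ⟨v, rfl⟩ := hy
  exact auxTp_mul_mem' x (ι_mem_auxTp v)

lemma auxTp_le_mul :
    auxTp K V ≤ (LinearMap.range (ι K : V →ₗ[K] TA)) * (⊤ : Submodule K TA) := by
  classical
  intro x hx
  have hsum := DirectSum.sum_support_decompose
    ((LinearMap.range (ι K : V →ₗ[K] TA) ^ ·) : ℕ → Submodule K TA) x
  have hcomp : ∀ n, ((DirectSum.decompose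
      ((LinearMap.range (ι K : V →ₗ[K] TA) ^ ·) : ℕ → Submodule K TA) x) n : TA)
      ∈ (LinearMap.range (ι K : V →ₗ[K] TA)) ^ n := fun n => SetLike.coe_mem _
  set dec := DirectSum.decompose
    ((LinearMap.range (ι K : V →ₗ[K] TA) ^ ·) : ℕ → Submodule K TA) x with hdec
  have h0 : ((dec 0 : ↥((LinearMap.range (ι K : V →ₗ[K] TA)) ^ 0)) : TA) = 0 := by
    have hε : ∀ b ∈ DFinsupp.support dec, b ≠ 0 →
        algebraMapInv (M := V) ((dec b : ↥((LinearMap.range (ι K : V →ₗ[K] TA)) ^ b)) : TA)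
          = 0 := fun n _ hn => mem_auxTp.mp (auxPow_le_Tp n hn (hcomp n))
    have hsum2 : ∑ n ∈ DFinsupp.support dec,
        algebraMapInv (M := V) ((dec n : ↥((LinearMap.range (ι K : V →ₗ[K] TA)) ^ n)) : TA)
          = 0 := by
      rw [← map_sum, hsum]
      exact hx
    have h00 : algebraMapInv (M := V)
        ((dec 0 : ↥((LinearMap.range (ι K : V →ₗ[K] TA)) ^ 0)) : TA) = 0 := by
      rw [← hsum2]
      refine (Finset.sum_eq_single 0 hε fun h => ?_).symm
      rw [DFinsupp.notMem_support_iff.mp h]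
      simp
    obtain ⟨y, hy⟩ : ∃ y : TA, y = ((dec 0 : ↥((LinearMap.range (ι K : V →ₗ[K] TA)) ^ 0)) : TA) :=
      ⟨_, rfl⟩
    have h1 : y ∈ (LinearMap.range (ι K : V →ₗ[K] TA)) ^ 0 := hy ▸ hcomp 0
    rw [pow_zero] at h1
    obtain ⟨c, hc⟩ := Submodule.mem_one.mp h1
    have hc0 : c = 0 := by
      rw [← algebraMapInv_algebraMap (V := V) c, hc, hy]
      exact h00
    rw [← hy, ← hc, hc0]
    simp
  rw [← hsum]
  refine Submodule.sum_mem _ fun n _ => ?_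
  by_cases h : n = 0
  · subst h
    rw [h0]
    exact Submodule.zero_mem _
  · obtain ⟨m, rfl⟩ := Nat.exists_eq_succ_of_ne_zero h
    have hle : (LinearMap.range (ι K : V →ₗ[K] TA)) ^ (m + 1)
        ≤ (LinearMap.range (ι K : V →ₗ[K] TA)) * (⊤ : Submodule K TA) := by
      rw [pow_succ']
      exact mul_le_mul' le_rfl le_top
    exact hle (hcomp _)

variable (K V)

/-- The associativity relators. -/
def auxRel : Submodule K (↥(auxTp K V) ⊗[K] ↥(auxTp K V)) :=
  Submodule.span K {ξ | ∃ a b c : ↥(auxTp K V), ξ =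
    (⟨(a : TA) * (b : TA), auxTp_mul_mem _ a.2⟩ : ↥(auxTp K V)) ⊗ₜ[K] c
      - a ⊗ₜ[K] (⟨(b : TA) * (c : TA), auxTp_mul_mem _ b.2⟩ : ↥(auxTp K V))}

variable {K V}

lemma auxRel_mem {a b c : ↥(auxTp K V)} {x y : ↥(auxTp K V)}
    (hx : (x : TA) = (a : TA) * (b : TA)) (hy : (y : TA) = (b : TA) * (c : TA)) :
    x ⊗ₜ[K] c - a ⊗ₜ[K] y ∈ auxRel K V := by
  refine Submodule.subset_span ⟨a, b, c, ?_⟩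
  congr 1 <;> congr 1 <;> exact Subtype.ext (by assumption)

lemma auxKey : ∀ a ∈ (LinearMap.range (ι K : V →ₗ[K] TA)) * (⊤ : Submodule K TA),
    ∀ b : ↥(auxTp K V),
    (auxRel K V).mkQ ((LinearMap.lTensor _ (auxPr K V)) (auxOp K V (b : TA) (auxD K V a)))
      = (auxRel K V).mkQ ((auxPr K V a) ⊗ₜ[K] b) := by
  intro a ha
  refine Submodule.mul_induction_on ha ?_ ?_
  · rintro m ⟨v, rfl⟩ t - b
    have hDa : auxD K V (ι K v * t)
        = (⟨ι K v, ι_mem_auxTp v⟩ : ↥(auxTp K V)) ⊗ₜ[K] t := by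
      rw [auxD_mul, auxD_ι, show algebraMapInv (M := V) (ι K v) = 0 from ι_mem_auxTp v,
        zero_smul, zero_add, auxOp_tmul, one_mul]
    rw [hDa, auxOp_tmul]
    set c := algebraMapInv (M := V) t with hc
    have ht' : t - algebraMap K TA c ∈ auxTp K V := by
      rw [mem_auxTp]
      simp [algebraMapInv_algebraMap, hc]
    have hsplit : t * (b : TA) = c • (b : TA) + (t - algebraMap K TA c) * (b : TA) := by
      rw [sub_mul, ← Algebra.smul_def]
      abel
    have hsplit2 : ι K v * t = c • (ι K v) + ι K v * (t - algebraMap K TA c) := by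
      rw [mul_sub, show ι K v * algebraMap K TA c = c • ι K v from by
        rw [← Algebra.commutes c (ι K v), ← Algebra.smul_def]]
      abel
    have hprtb : auxPr K V (t * (b : TA))
        = c • b + ⟨(t - algebraMap K TA c) * (b : TA), auxTp_mul_mem _ ht'⟩ := by
      rw [hsplit, map_add, map_smul, auxPr_mem (auxTp_mul_mem ((b : TA)) ht'), auxPr_mem b.2]
    have hpra : auxPr K V (ι K v * t)
        = c • ⟨ι K v, ι_mem_auxTp v⟩
          + ⟨ι K v * (t - algebraMap K TA c), auxTp_mul_mem _ (ι_mem_auxTp v)⟩ := by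
      rw [hsplit2, map_add, map_smul, auxPr_mem (auxTp_mul_mem _ (ι_mem_auxTp v)),
        auxPr_mem (ι_mem_auxTp v)]
    rw [LinearMap.lTensor_tmul, hprtb, hpra, TensorProduct.tmul_add, TensorProduct.add_tmul,
      TensorProduct.tmul_smul, TensorProduct.smul_tmul', map_add, map_add]
    congr 1
    rw [Submodule.mkQ_apply, Submodule.mkQ_apply, Submodule.Quotient.eq]
    have hrel := auxRel_mem (a := ⟨ι K v, ι_mem_auxTp v⟩)
      (b := ⟨t - algebraMap K TA c, ht'⟩) (c := b)
      (x := ⟨ι K v * (t - algebraMap K TA c), auxTp_mul_mem _ (ι_mem_auxTp v)⟩)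
      (y := ⟨(t - algebraMap K TA c) * (b : TA), auxTp_mul_mem _ ht'⟩) rfl rfl
    have h2 := Submodule.neg_mem _ hrel
    rwa [neg_sub] at h2
  · intro x y hx hy b
    simp only [map_add, TensorProduct.add_tmul]
    rw [hx b, hy b]



lemma auxRel_le {P : Submodule K (↥(auxTp K V) ⊗[K] ↥(auxTp K V))}
    (h : ∀ a b c : ↥(auxTp K V),
      ((⟨(a : TA) * (b : TA), auxTp_mul_mem _ a.2⟩ : ↥(auxTp K V)) ⊗ₜ[K] c
        - a ⊗ₜ[K] (⟨(b : TA) * (c : TA), auxTp_mul_mem _ b.2⟩ : ↥(auxTp K V))) ∈ P) :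
    auxRel K V ≤ P := by
  rw [auxRel]
  rw [Submodule.span_le]
  rintro ξ ⟨a, b, c, rfl⟩
  exact h a b c

lemma auxKerMul_le :
    LinearMap.ker (Submodule.mulMap (auxTp K V) (auxTp K V)) ≤ auxRel K V := by
  have claim : ∀ a b : ↥(auxTp K V),
      (auxRel K V).mkQ ((LinearMap.lTensor _ (auxPr K V))
        (auxD K V ((Submodule.mulMap (auxTp K V) (auxTp K V)) (a ⊗ₜ[K] b))))
        = (auxRel K V).mkQ (a ⊗ₜ[K] b) := by
    intro a b
    rw [Submodule.mulMap_tmul, auxD_mul,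
      show algebraMapInv (M := V) (a : TA) = 0 from a.2, zero_smul, zero_add,
      auxKey (a : TA) (auxTp_le_mul a.2) b, auxPr_mem a.2]
  have hfac : ((auxRel K V).mkQ ∘ₗ ((LinearMap.lTensor _ (auxPr K V)) ∘ₗ ((auxD K V)
      ∘ₗ (Submodule.mulMap (auxTp K V) (auxTp K V)))))
      = (auxRel K V).mkQ := TensorProduct.ext' (fun a b => by simpa using claim a b)
  intro ξ hξ
  have h2 : (auxRel K V).mkQ ξ = 0 := by
    rw [← hfac]
    show (auxRel K V).mkQ ((LinearMap.lTensor _ (auxPr K V))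
      (auxD K V ((Submodule.mulMap (auxTp K V) (auxTp K V)) ξ))) = 0
    rw [LinearMap.mem_ker.mp hξ, map_zero, map_zero, map_zero]
  rwa [Submodule.mkQ_apply, Submodule.Quotient.mk_eq_zero] at h2

end MBAux


open TensorProduct

/-- Let `B = T(V)/I` be an augmented graded algebra, where `V` is a vector space and
`I ⊆ ⊕_{n≥2} V^{⊗n}` is a homogeneous ideal (here: `I` is the kernel of a surjective
algebra map `π : T(V) → B`, it is contained in `(T(V)⁺)²  = ⊕_{n≥2} V^{⊗n}` and is
stable under the homogeneous projections of the standard grading of `T(V)`). Then the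
kernel `M(B)` of the multiplication map `B⁺ ⊗_B B⁺ → B`, where `B⁺` is the augmentation
ideal and `B⁺ ⊗_B B⁺ = (B⁺ ⊗ B⁺)/Im(m⊗1 − 1⊗m)`, is isomorphic to
`I/(T(V)⁺·I + I·T(V)⁺)`. -/
theorem MB_iso_I_quotient (K V B : Type*) [Field K] [AddCommGroup V] [Module K V]
    [Ring B] [Algebra K B]
    (π : TensorAlgebra K V →ₐ[K] B) (hπ : Function.Surjective π)
    (εT : TensorAlgebra K V →ₐ[K] K) (hεT : ∀ v : V, εT (TensorAlgebra.ι K v) = 0)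
    (εB : B →ₐ[K] K) (hεB : εB.comp π = εT)
    (I : Submodule K (TensorAlgebra K V)) (hI : I = LinearMap.ker π.toLinearMap)
    (Tplus : Submodule K (TensorAlgebra K V))
    (hTplus : Tplus = LinearMap.ker εT.toLinearMap)
    (hI2 : I ≤ Tplus * Tplus)
    (hIhom : ∀ x ∈ I, ∀ n : ℕ,
      ((DirectSum.decompose
          ((LinearMap.range (TensorAlgebra.ι K : V →ₗ[K] TensorAlgebra K V) ^ ·) :
            ℕ → Submodule K (TensorAlgebra K V)) x) n : TensorAlgebra K V) ∈ I)
    (Bplus : Submodule K B) (hBplus : Bplus = LinearMap.ker εB.toLinearMap)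
    (μ : (↥Bplus ⊗[K] ↥Bplus) →ₗ[K] B)
    (hμ : ∀ a b : Bplus, μ (a ⊗ₜ[K] b) = (a : B) * (b : B))
    (ν : (↥Bplus ⊗[K] (↥Bplus ⊗[K] ↥Bplus)) →ₗ[K] (↥Bplus ⊗[K] ↥Bplus))
    (hν : ∀ a b c : Bplus,
      TensorProduct.map Bplus.subtype Bplus.subtype (ν (a ⊗ₜ[K] (b ⊗ₜ[K] c)))
        = ((a : B) * (b : B)) ⊗ₜ[K] (c : B) - (a : B) ⊗ₜ[K] ((b : B) * (c : B)))
    (μbar : (@HasQuotient.Quotient _ _ (Submodule.hasQuotient (M := ↥Bplus ⊗[K] ↥Bplus))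
      (LinearMap.range ν)) →ₗ[K] B)
    (hμbar : μbar ∘ₗ (Submodule.mkQ (M := ↥Bplus ⊗[K] ↥Bplus) (LinearMap.range ν) :) = μ) :
    Nonempty ((LinearMap.ker μbar) ≃ₗ[K]
      (↥I ⧸ Submodule.comap I.subtype (Tplus * I + I * Tplus))) := by
  classical
  letI : ∀ p : Submodule K B, AddCommGroup ↥p := fun p => auxSubmoduleACG p
  letI : ∀ p : Submodule K (TensorAlgebra K V), AddCommGroup ↥p := fun p => auxSubmoduleTAACG p
  -- `εT` is the canonical augmentation
  have hεc : εT = (TensorAlgebra.algebraMapInv : TensorAlgebra K V →ₐ[K] K) := by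
    apply TensorAlgebra.hom_ext
    apply LinearMap.ext
    intro v
    simp only [LinearMap.coe_comp, Function.comp_apply, AlgHom.toLinearMap_apply]
    rw [hεT v]
    exact (ι_mem_auxTp v).symm
  subst hεc
  have hTp : Tplus = auxTp K V := hTplus
  subst hTp
  clear hIhom
  -- basic facts
  have hTpTp_le : auxTp K V * auxTp K V ≤ auxTp K V :=
    Submodule.mul_le.mpr fun x hx y _ => auxTp_mul_mem y hx
  have hI_le : I ≤ auxTp K V := le_trans hI2 hTpTp_le
  have hεBπ : ∀ x : TensorAlgebra K V,
      εB (π x) = TensorAlgebra.algebraMapInv (M := V) x := by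
    intro x
    have := congrArg (fun f : TensorAlgebra K V →ₐ[K] K => f x) hεB
    simpa using this
  have hBmem : ∀ x : B, x ∈ Bplus ↔ εB x = 0 := by
    intro x
    rw [hBplus]
    exact Iff.rfl
  have hπmem : ∀ x : TensorAlgebra K V, x ∈ auxTp K V → π x ∈ Bplus := by
    intro x hx
    rw [hBmem, hεBπ x]
    exact hx
  have hmulB : ∀ a b : ↥Bplus, (a : B) * (b : B) ∈ Bplus := by
    intro a b
    rw [hBmem, map_mul, (hBmem _).mp a.2, zero_mul]
  -- the induced map on augmentation ideals
  set πp : ↥(auxTp K V) →ₗ[K] ↥Bplus :=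
    π.toLinearMap.restrict (p := auxTp K V) (q := Bplus) (fun x hx => hπmem x hx) with hπpdef
  have hπp_apply : ∀ x : ↥(auxTp K V), ((πp x : B)) = π (x : TensorAlgebra K V) := fun x => rfl
  have hImem : ∀ y : TensorAlgebra K V, y ∈ I ↔ π y = 0 := by
    intro y
    rw [hI]
    exact Iff.rfl
  have hπpsurj : Function.Surjective πp := by
    intro y
    obtain ⟨x, hx⟩ := hπ (y : B)
    have hxT : x ∈ auxTp K V := by
      show TensorAlgebra.algebraMapInv (M := V) x = 0
      rw [← hεBπ x, hx]
      exact (hBmem _).mp y.2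
    exact ⟨⟨x, hxT⟩, Subtype.ext (by rw [hπp_apply]; exact hx)⟩
  have hkerπp : ∀ x : ↥(auxTp K V), (πp x = 0) ↔ ((x : TensorAlgebra K V) ∈ I) := by
    intro x
    rw [hImem]
    constructor
    · intro h
      have := congrArg (Subtype.val) h
      rw [hπp_apply] at this
      simpa using this
    · intro h
      refine Subtype.ext ?_
      rw [hπp_apply]
      simpa using h
  -- injectivity of the inclusion of `B⁺ ⊗ B⁺` in `B ⊗ B`, and the subtype form of `hν`
  have hJinj : Function.Injective (TensorProduct.map Bplus.subtype Bplus.subtype) := by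
    rw [← LinearMap.lTensor_comp_rTensor]
    rw [LinearMap.coe_comp]
    exact Function.Injective.comp
      (Module.Flat.lTensor_preserves_injective_linearMap _ (Submodule.injective_subtype _))
      (Module.Flat.rTensor_preserves_injective_linearMap _ (Submodule.injective_subtype _))
  have hν' : ∀ a b c : ↥Bplus, ν (a ⊗ₜ[K] (b ⊗ₜ[K] c))
      = (⟨(a : B) * (b : B), hmulB a b⟩ : ↥Bplus) ⊗ₜ[K] c
        - a ⊗ₜ[K] (⟨(b : B) * (c : B), hmulB b c⟩ : ↥Bplus) := by
    intro a b c
    apply hJinj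
    rw [hν a b c, map_sub]
    simp only [TensorProduct.map_tmul, Submodule.coe_subtype]
  -- the multiplication map on the tensor-algebra side
  set m' := Submodule.mulMap (auxTp K V) (auxTp K V) with hm'def
  have hm'tmul : ∀ a b : ↥(auxTp K V),
      m' (a ⊗ₜ[K] b) = (a : TensorAlgebra K V) * (b : TensorAlgebra K V) := fun a b => rfl
  have hm'range : ∀ ξ, m' ξ ∈ auxTp K V * auxTp K V := by
    intro ξ
    rw [← Submodule.mulMap_range (auxTp K V) (auxTp K V)]
    exact LinearMap.mem_range_self _ ξ
  have hμP2 : ∀ ξ, μ (TensorProduct.map πp πp ξ) = π (m' ξ) := by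
    have : μ ∘ₗ TensorProduct.map πp πp = π.toLinearMap ∘ₗ m' := by
      apply TensorProduct.ext'
      intro a b
      simp only [LinearMap.coe_comp, Function.comp_apply, TensorProduct.map_tmul,
        AlgHom.toLinearMap_apply, hμ, hπp_apply, hm'tmul, map_mul]
    intro ξ
    exact LinearMap.congr_fun this ξ
  -- relators are killed
  have hRel_le : auxRel K V ≤ LinearMap.ker
      ((LinearMap.range ν).mkQ ∘ₗ TensorProduct.map πp πp) := by
    refine auxRel_le fun a b c => ?_
    rw [LinearMap.mem_ker, LinearMap.comp_apply, map_sub,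
      TensorProduct.map_tmul, TensorProduct.map_tmul]
    have e1 : πp ⟨(a : TensorAlgebra K V) * (b : TensorAlgebra K V), auxTp_mul_mem _ a.2⟩
        = ⟨(πp a : B) * (πp b : B), hmulB _ _⟩ := by
      refine Subtype.ext ?_
      show π ((a : TensorAlgebra K V) * (b : TensorAlgebra K V)) = _
      rw [map_mul]
      rfl
    have e2 : πp ⟨(b : TensorAlgebra K V) * (c : TensorAlgebra K V), auxTp_mul_mem _ b.2⟩
        = ⟨(πp b : B) * (πp c : B), hmulB _ _⟩ := by
      refine Subtype.ext ?_
      show π ((b : TensorAlgebra K V) * (c : TensorAlgebra K V)) = _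
      rw [map_mul]
      rfl
    rw [e1, e2, ← hν' (πp a) (πp b) (πp c), Submodule.mkQ_apply,
      Submodule.Quotient.mk_eq_zero]
    exact LinearMap.mem_range_self ν _
  have hstep1 : LinearMap.ker m' ≤ LinearMap.ker
      ((LinearMap.range ν).mkQ ∘ₗ TensorProduct.map πp πp) :=
    le_trans auxKerMul_le hRel_le
  -- the factorized map on `T⁺ · T⁺`
  obtain ⟨lam, hlam⟩ : ∃ lam : ↥(auxTp K V * auxTp K V) →ₗ[K]
      ((↥Bplus ⊗[K] ↥Bplus) ⧸ LinearMap.range ν),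
      ∀ (ξ) (h : m' ξ ∈ auxTp K V * auxTp K V),
        lam ⟨m' ξ, h⟩ = (LinearMap.range ν).mkQ (TensorProduct.map πp πp ξ) := by
    refine ⟨(Submodule.liftQ _ _ hstep1) ∘ₗ ((LinearMap.quotKerEquivRange m').symm.toLinearMap
      ∘ₗ (LinearEquiv.ofEq _ _ (Submodule.mulMap_range (auxTp K V) (auxTp K V)).symm).toLinearMap),
      ?_⟩
    intro ξ h
    rw [LinearMap.comp_apply, LinearMap.comp_apply]
    have e0 : (LinearEquiv.ofEq _ _
        (Submodule.mulMap_range (auxTp K V) (auxTp K V)).symm).toLinearMap ⟨m' ξ, h⟩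
        = ⟨m' ξ, LinearMap.mem_range_self m' ξ⟩ := rfl
    rw [e0]
    have e1 : (LinearMap.quotKerEquivRange m').symm ⟨m' ξ, LinearMap.mem_range_self m' ξ⟩
        = Submodule.Quotient.mk ξ := by
      rw [LinearEquiv.symm_apply_eq]
      exact Subtype.ext (LinearMap.quotKerEquivRange_apply_mk m' ξ).symm
    simp only [LinearEquiv.coe_toLinearMap]
    rw [e1, Submodule.liftQ_apply]
    rfl
  -- restriction to `I`
  have hexists : ∀ x : ↥I, ∃ ξ, m' ξ = (x : TensorAlgebra K V) := by
    intro x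
    have : (x : TensorAlgebra K V) ∈ LinearMap.range m' := by
      rw [Submodule.mulMap_range (auxTp K V) (auxTp K V)]
      exact hI2 x.2
    exact this
  set lamI : ↥I →ₗ[K] ((↥Bplus ⊗[K] ↥Bplus) ⧸ LinearMap.range ν) :=
    lam ∘ₗ Submodule.inclusion hI2 with hlamIdef
  have hlamI_spec : ∀ (x : ↥I) (ξ), m' ξ = (x : TensorAlgebra K V) →
      lamI x = (LinearMap.range ν).mkQ (TensorProduct.map πp πp ξ) := by
    intro x ξ hξ
    have : Submodule.inclusion hI2 x = ⟨m' ξ, hξ ▸ hm'range ξ⟩ := Subtype.ext hξ.symm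
    rw [hlamIdef, LinearMap.comp_apply, this, hlam ξ _]
  have hker0 : ∀ x : ↥I, μbar (lamI x) = 0 := by
    intro x
    obtain ⟨ξ, hξ⟩ := hexists x
    rw [hlamI_spec x ξ hξ]
    have := LinearMap.congr_fun hμbar (TensorProduct.map πp πp ξ)
    rw [LinearMap.comp_apply] at this
    rw [this, hμP2, hξ]
    exact (hImem _).mp x.2
  set lamI' : ↥I →ₗ[K] ↥(LinearMap.ker μbar) :=
    LinearMap.codRestrict _ lamI (fun x => LinearMap.mem_ker.mpr (hker0 x)) with hlamI'def
  have hlamI'_apply : ∀ x : ↥I, ((lamI' x : _)) = lamI x := fun x => rfl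
  -- surjectivity
  have hsurj : Function.Surjective lamI' := by
    rintro ⟨c, hc⟩
    obtain ⟨w, hw⟩ := Submodule.Quotient.mk_surjective _ c
    obtain ⟨ξ, hξ⟩ := TensorProduct.map_surjective hπpsurj hπpsurj w
    have hxI : m' ξ ∈ I := by
      rw [hImem]
      have h1 : μ (TensorProduct.map πp πp ξ) = 0 := by
        rw [hξ, ← hμbar, LinearMap.comp_apply, Submodule.mkQ_apply, hw]
        exact LinearMap.mem_ker.mp hc
      rw [← hμP2 ξ]
      exact h1
    refine ⟨⟨m' ξ, hxI⟩, ?_⟩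
    refine Subtype.ext ?_
    rw [hlamI'_apply, hlamI_spec _ ξ rfl, hξ, Submodule.mkQ_apply, hw]
  -- the kernel of `lamI'`
  have hkerlam : LinearMap.ker lamI'
      = Submodule.comap I.subtype (auxTp K V * I + I * auxTp K V) := by
    -- projection onto `B⁺`
    obtain ⟨prB, hprB⟩ : ∃ prB : B →ₗ[K] ↥Bplus,
        ∀ (b : B) (h : b ∈ Bplus), prB b = ⟨b, h⟩ := by
      refine ⟨LinearMap.codRestrict _
        (LinearMap.id - (Algebra.linearMap K B ∘ₗ εB.toLinearMap)) (fun x => ?_), ?_⟩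
      · rw [hBmem]
        simp
      · intro b h
        refine Subtype.ext ?_
        show b - algebraMap K B (εB b) = b
        rw [(hBmem b).mp h, map_zero, sub_zero]
    -- relator consequences on the B side
    have hBL : ∀ (p : ↥Bplus) (f : ↥Bplus →ₗ[K] ↥Bplus),
        (∀ a : ↥Bplus, ((f a : B)) = (p : B) * (a : B)) → ∀ w,
        (LinearMap.range ν).mkQ (LinearMap.rTensor ↥Bplus f w)
          = (LinearMap.range ν).mkQ (p ⊗ₜ[K] prB (μ w)) := by
      intro p f hf
      have key : (LinearMap.range ν).mkQ ∘ₗ LinearMap.rTensor ↥Bplus f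
          = (LinearMap.range ν).mkQ ∘ₗ ((TensorProduct.mk K ↥Bplus ↥Bplus p) ∘ₗ prB ∘ₗ μ) := by
        apply TensorProduct.ext'
        intro a b
        simp only [LinearMap.coe_comp, Function.comp_apply, LinearMap.rTensor_tmul,
          TensorProduct.mk_apply, hμ, hprB _ (hmulB a b)]
        rw [Submodule.mkQ_apply, Submodule.mkQ_apply, Submodule.Quotient.eq]
        have hfa : f a = ⟨(p : B) * (a : B), hmulB p a⟩ := Subtype.ext (hf a)
        rw [hfa, ← hν' p a b]
        exact LinearMap.mem_range_self ν _
      intro w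
      exact LinearMap.congr_fun key w
    have hBR : ∀ (p : ↥Bplus) (f : ↥Bplus →ₗ[K] ↥Bplus),
        (∀ a : ↥Bplus, ((f a : B)) = (a : B) * (p : B)) → ∀ w,
        (LinearMap.range ν).mkQ (LinearMap.lTensor ↥Bplus f w)
          = (LinearMap.range ν).mkQ (prB (μ w) ⊗ₜ[K] p) := by
      intro p f hf
      have key : (LinearMap.range ν).mkQ ∘ₗ LinearMap.lTensor ↥Bplus f
          = (LinearMap.range ν).mkQ ∘ₗ
            (((TensorProduct.mk K ↥Bplus ↥Bplus).flip p) ∘ₗ prB ∘ₗ μ) := by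
        apply TensorProduct.ext'
        intro a b
        simp only [LinearMap.coe_comp, Function.comp_apply, LinearMap.lTensor_tmul,
          LinearMap.flip_apply, TensorProduct.mk_apply, hμ, hprB _ (hmulB a b)]
        rw [Submodule.mkQ_apply, Submodule.mkQ_apply, Submodule.Quotient.eq]
        have hfb : f b = ⟨(b : B) * (p : B), hmulB b p⟩ := Subtype.ext (hf b)
        rw [hfb]
        have h2 := Submodule.neg_mem _ (LinearMap.mem_range_self ν (a ⊗ₜ[K] (b ⊗ₜ[K] p)))
        rw [hν' a b p, neg_sub] at h2
        exact h2
      intro w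
      exact LinearMap.congr_fun key w
    apply le_antisymm
    · -- hard direction : the kernel is contained in `T⁺I + IT⁺`
      intro x hx
      have hx0 : lamI x = 0 := by
        have h1 := LinearMap.mem_ker.mp hx
        have h2 := congrArg (Subtype.val) h1
        rw [hlamI'_apply] at h2
        simpa using h2
      obtain ⟨ξ, hξ⟩ := hexists x
      have hP2ξ : TensorProduct.map πp πp ξ ∈ LinearMap.range ν := by
        rw [hlamI_spec x ξ hξ, Submodule.mkQ_apply, Submodule.Quotient.mk_eq_zero] at hx0
        exact hx0
      obtain ⟨u, hu⟩ := hP2ξ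
      obtain ⟨U, hU⟩ := TensorProduct.map_surjective hπpsurj
        (TensorProduct.map_surjective hπpsurj hπpsurj) u
      set mq : ↥(auxTp K V) ⊗[K] ↥(auxTp K V) →ₗ[K] ↥(auxTp K V) :=
        LinearMap.codRestrict _ m' (fun η => hTpTp_le (hm'range η)) with hmqdef
      have hmq : ∀ η, ((mq η : TensorAlgebra K V)) = m' η := fun _ => rfl
      set νT : ↥(auxTp K V) ⊗[K] (↥(auxTp K V) ⊗[K] ↥(auxTp K V)) →ₗ[K]
          ↥(auxTp K V) ⊗[K] ↥(auxTp K V) :=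
        (LinearMap.rTensor _ mq) ∘ₗ (TensorProduct.assoc K _ _ _).symm.toLinearMap
          - LinearMap.lTensor _ mq with hνTdef
      have hνT : ∀ a b c : ↥(auxTp K V), νT (a ⊗ₜ[K] (b ⊗ₜ[K] c))
          = mq (a ⊗ₜ[K] b) ⊗ₜ[K] c - a ⊗ₜ[K] mq (b ⊗ₜ[K] c) := by
        intro a b c
        rw [hνTdef]
        simp only [LinearMap.sub_apply, LinearMap.coe_comp, Function.comp_apply,
          LinearEquiv.coe_toLinearMap, TensorProduct.assoc_symm_tmul,
          LinearMap.rTensor_tmul, LinearMap.lTensor_tmul]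
      have hcomm2 : ∀ W, TensorProduct.map πp πp (νT W)
          = ν (TensorProduct.map πp (TensorProduct.map πp πp) W) := by
        have key : (TensorProduct.map πp πp) ∘ₗ νT
            = ν ∘ₗ TensorProduct.map πp (TensorProduct.map πp πp) := by
          apply TensorProduct.ext'
          intro a w
          induction w using TensorProduct.induction_on with
          | zero => simp
          | tmul b c =>
            simp only [LinearMap.coe_comp, Function.comp_apply, TensorProduct.map_tmul]
            rw [hνT a b c, map_sub, TensorProduct.map_tmul, TensorProduct.map_tmul,
              hν' (πp a) (πp b) (πp c)]
            congr 1
            · congr 1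
              exact Subtype.ext (by
                show π ((a : TensorAlgebra K V) * (b : TensorAlgebra K V)) = _
                rw [map_mul]
                rfl)
            · congr 1
              exact Subtype.ext (by
                show π ((b : TensorAlgebra K V) * (c : TensorAlgebra K V)) = _
                rw [map_mul]
                rfl)
          | add w1 w2 h1 h2 =>
            simp only [LinearMap.coe_comp, Function.comp_apply] at h1 h2 ⊢
            simp only [TensorProduct.tmul_add, map_add, h1, h2]
        intro W
        exact LinearMap.congr_fun key W
      have hdiff : TensorProduct.map πp πp (ξ - νT U) = 0 := by
        rw [map_sub, hcomm2, hU, hu, sub_self]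
      have hm := LinearMap.mem_ker.mpr hdiff
      rw [TensorProduct.map_ker (LinearMap.exact_subtype_ker_map πp) hπpsurj
        (LinearMap.exact_subtype_ker_map πp) hπpsurj] at hm
      rw [Submodule.mem_sup] at hm
      obtain ⟨y, hy, z, hz, hyz⟩ := hm
      have hm'νT : m' (νT U) = 0 := by
        have key : m' ∘ₗ νT = 0 := by
          apply TensorProduct.ext'
          intro a w
          induction w using TensorProduct.induction_on with
          | zero => simp
          | tmul b c =>
            simp only [LinearMap.coe_comp, Function.comp_apply, LinearMap.zero_apply]
            rw [hνT, map_sub, hm'tmul, hm'tmul, hmq, hmq, hm'tmul, hm'tmul, mul_assoc,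
              sub_self]
          | add w1 w2 h1 h2 =>
            simp only [LinearMap.coe_comp, Function.comp_apply, LinearMap.zero_apply] at h1 h2 ⊢
            simp only [TensorProduct.tmul_add, map_add, h1, h2, add_zero]
        exact LinearMap.congr_fun key U
      have hxval : (x : TensorAlgebra K V) = m' y + m' z := by
        have h3 : m' y + m' z = (x : TensorAlgebra K V) := by
          rw [← map_add, hyz, map_sub, hm'νT, sub_zero, hξ]
        exact h3.symm
      have hymAll : ∀ η, m' (LinearMap.lTensor _ (LinearMap.ker πp).subtype η)
          ∈ auxTp K V * I := by
        intro η
        induction η using TensorProduct.induction_on with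
        | zero =>
          rw [map_zero, map_zero]
          exact Submodule.zero_mem _
        | tmul a k =>
          rw [LinearMap.lTensor_tmul, hm'tmul]
          exact Submodule.mul_mem_mul a.2 ((hkerπp _).mp k.2)
        | add w1 w2 h1 h2 =>
          rw [map_add, map_add]
          exact Submodule.add_mem _ h1 h2
      have hym : m' y ∈ auxTp K V * I := by
        obtain ⟨η, hη⟩ := hy
        rw [← hη]
        exact hymAll η
      have hzmAll : ∀ η, m' (LinearMap.rTensor _ (LinearMap.ker πp).subtype η)
          ∈ I * auxTp K V := by
        intro η
        induction η using TensorProduct.induction_on with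
        | zero =>
          rw [map_zero, map_zero]
          exact Submodule.zero_mem _
        | tmul k b =>
          rw [LinearMap.rTensor_tmul, hm'tmul]
          exact Submodule.mul_mem_mul ((hkerπp _).mp k.2) b.2
        | add w1 w2 h1 h2 =>
          rw [map_add, map_add]
          exact Submodule.add_mem _ h1 h2
      have hzm : m' z ∈ I * auxTp K V := by
        obtain ⟨η, hη⟩ := hz
        rw [← hη]
        exact hzmAll η
      refine Submodule.mem_comap.mpr ?_
      show (x : TensorAlgebra K V) ∈ auxTp K V * I + I * auxTp K V
      rw [hxval]
      exact Submodule.add_mem_sup hym hzm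
    · -- easy direction : `T⁺I + IT⁺` is killed
      intro x hx
      have hxs : (x : TensorAlgebra K V) ∈ auxTp K V * I + I * auxTp K V := hx
      have claimL : ∀ y ∈ auxTp K V * I, (y ∈ auxTp K V * auxTp K V) ∧
          ∀ (h : y ∈ auxTp K V * auxTp K V), lam ⟨y, h⟩ = 0 := by
        intro y hy
        refine Submodule.mul_induction_on hy ?_ ?_
        · intro t ht xx hxx
          have hmemTT : t * xx ∈ auxTp K V * auxTp K V :=
            Submodule.mul_mem_mul ht (hI_le hxx)
          refine ⟨hmemTT, ?_⟩
          intro h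
          obtain ⟨ξ, hξ⟩ : ∃ ξ, m' ξ = xx := by
            have hr : xx ∈ LinearMap.range m' := by
              rw [hm'def, Submodule.mulMap_range]
              exact hI2 hxx
            exact hr
          set mt : ↥(auxTp K V) →ₗ[K] ↥(auxTp K V) :=
            (LinearMap.mulLeft K t).restrict (p := auxTp K V) (q := auxTp K V)
              (fun u hu => auxTp_mul_mem' t hu) with hmtdef
          have hmt : ∀ u : ↥(auxTp K V), ((mt u : TensorAlgebra K V)) = t * (u : _) :=
            fun u => rfl
          have hm'mt : ∀ η, m' (LinearMap.rTensor _ mt η) = t * m' η := by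
            have key : m' ∘ₗ LinearMap.rTensor _ mt = (LinearMap.mulLeft K t) ∘ₗ m' := by
              apply TensorProduct.ext'
              intro u v
              simp only [LinearMap.coe_comp, Function.comp_apply, LinearMap.rTensor_tmul,
                hm'tmul, LinearMap.mulLeft_apply, hmt, mul_assoc]
            intro η
            exact LinearMap.congr_fun key η
          have hsub : (⟨t * xx, h⟩ : ↥(auxTp K V * auxTp K V))
              = ⟨m' (LinearMap.rTensor _ mt ξ), hm'range _⟩ :=
            Subtype.ext (by show t * xx = m' (LinearMap.rTensor _ mt ξ); rw [hm'mt, hξ])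
          rw [hsub, hlam]
          set p : ↥Bplus := πp ⟨t, ht⟩ with hpdef
          set f : ↥Bplus →ₗ[K] ↥Bplus :=
            (LinearMap.mulLeft K (p : B)).restrict (p := Bplus) (q := Bplus)
              (fun u hu => hmulB p ⟨u, hu⟩) with hfdef
          have hf : ∀ a : ↥Bplus, ((f a : B)) = (p : B) * (a : B) := fun a => rfl
          have hcommm : TensorProduct.map πp πp (LinearMap.rTensor _ mt ξ)
              = LinearMap.rTensor _ f (TensorProduct.map πp πp ξ) := by
            have key : TensorProduct.map πp πp ∘ₗ LinearMap.rTensor _ mt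
                = LinearMap.rTensor _ f ∘ₗ TensorProduct.map πp πp := by
              apply TensorProduct.ext'
              intro u v
              simp only [LinearMap.coe_comp, Function.comp_apply, LinearMap.rTensor_tmul,
                TensorProduct.map_tmul]
              congr 1
              exact Subtype.ext (by
                show π (t * (u : TensorAlgebra K V)) = (p : B) * ((πp u : B))
                rw [map_mul]
                rfl)
            exact LinearMap.congr_fun key ξ
          rw [hcommm, hBL p f hf]
          have hz0 : μ (TensorProduct.map πp πp ξ) = 0 := by
            rw [hμP2, hξ]
            exact (hImem xx).mp hxx
          rw [hz0, map_zero, TensorProduct.tmul_zero, map_zero]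
        · intro y1 y2 h1 h2
          refine ⟨Submodule.add_mem _ h1.1 h2.1, ?_⟩
          intro h
          have hsplit : (⟨y1 + y2, h⟩ : ↥(auxTp K V * auxTp K V))
              = ⟨y1, h1.1⟩ + ⟨y2, h2.1⟩ := rfl
          rw [hsplit, map_add, h1.2 h1.1, h2.2 h2.1, add_zero]
      have claimR : ∀ y ∈ I * auxTp K V, (y ∈ auxTp K V * auxTp K V) ∧
          ∀ (h : y ∈ auxTp K V * auxTp K V), lam ⟨y, h⟩ = 0 := by
        intro y hy
        refine Submodule.mul_induction_on hy ?_ ?_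
        · intro xx hxx t ht
          have hmemTT : xx * t ∈ auxTp K V * auxTp K V :=
            Submodule.mul_mem_mul (hI_le hxx) ht
          refine ⟨hmemTT, ?_⟩
          intro h
          obtain ⟨ξ, hξ⟩ : ∃ ξ, m' ξ = xx := by
            have hr : xx ∈ LinearMap.range m' := by
              rw [hm'def, Submodule.mulMap_range]
              exact hI2 hxx
            exact hr
          set mt : ↥(auxTp K V) →ₗ[K] ↥(auxTp K V) :=
            (LinearMap.mulRight K t).restrict (p := auxTp K V) (q := auxTp K V)
              (fun u hu => auxTp_mul_mem t hu) with hmtdef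
          have hmt : ∀ u : ↥(auxTp K V), ((mt u : TensorAlgebra K V)) = (u : _) * t :=
            fun u => rfl
          have hm'mt : ∀ η, m' (LinearMap.lTensor _ mt η) = m' η * t := by
            have key : m' ∘ₗ LinearMap.lTensor _ mt = (LinearMap.mulRight K t) ∘ₗ m' := by
              apply TensorProduct.ext'
              intro u v
              simp only [LinearMap.coe_comp, Function.comp_apply, LinearMap.lTensor_tmul,
                hm'tmul, LinearMap.mulRight_apply, hmt, mul_assoc]
            intro η
            exact LinearMap.congr_fun key η
          have hsub : (⟨xx * t, h⟩ : ↥(auxTp K V * auxTp K V))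
              = ⟨m' (LinearMap.lTensor _ mt ξ), hm'range _⟩ :=
            Subtype.ext (by show xx * t = m' (LinearMap.lTensor _ mt ξ); rw [hm'mt, hξ])
          rw [hsub, hlam]
          set p : ↥Bplus := πp ⟨t, ht⟩ with hpdef
          set f : ↥Bplus →ₗ[K] ↥Bplus :=
            (LinearMap.mulRight K (p : B)).restrict (p := Bplus) (q := Bplus)
              (fun u hu => hmulB ⟨u, hu⟩ p) with hfdef
          have hf : ∀ a : ↥Bplus, ((f a : B)) = (a : B) * (p : B) := fun a => rfl
          have hcommm : TensorProduct.map πp πp (LinearMap.lTensor _ mt ξ)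
              = LinearMap.lTensor _ f (TensorProduct.map πp πp ξ) := by
            have key : TensorProduct.map πp πp ∘ₗ LinearMap.lTensor _ mt
                = LinearMap.lTensor _ f ∘ₗ TensorProduct.map πp πp := by
              apply TensorProduct.ext'
              intro u v
              simp only [LinearMap.coe_comp, Function.comp_apply, LinearMap.lTensor_tmul,
                TensorProduct.map_tmul]
              congr 1
              exact Subtype.ext (by
                show π ((v : TensorAlgebra K V) * t) = ((πp v : B)) * (p : B)
                rw [map_mul]
                rfl)
            exact LinearMap.congr_fun key ξ
          rw [hcommm, hBR p f hf]
          have hz0 : μ (TensorProduct.map πp πp ξ) = 0 := by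
            rw [hμP2, hξ]
            exact (hImem xx).mp hxx
          rw [hz0, map_zero, TensorProduct.zero_tmul, map_zero]
        · intro y1 y2 h1 h2
          refine ⟨Submodule.add_mem _ h1.1 h2.1, ?_⟩
          intro h
          have hsplit : (⟨y1 + y2, h⟩ : ↥(auxTp K V * auxTp K V))
              = ⟨y1, h1.1⟩ + ⟨y2, h2.1⟩ := rfl
          rw [hsplit, map_add, h1.2 h1.1, h2.2 h2.1, add_zero]
      rw [Submodule.add_eq_sup, Submodule.mem_sup] at hxs
      obtain ⟨y, hy, z, hz, hyz⟩ := hxs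
      have hL := claimL y hy
      have hR := claimR z hz
      have hsplit : (⟨(x : TensorAlgebra K V), hI2 x.2⟩ : ↥(auxTp K V * auxTp K V))
          = ⟨y, hL.1⟩ + ⟨z, hR.1⟩ := Subtype.ext (by exact hyz.symm)
      rw [LinearMap.mem_ker]
      refine Subtype.ext ?_
      show lam ⟨(x : TensorAlgebra K V), hI2 x.2⟩ = 0
      rw [hsplit, map_add, hL.2 hL.1, hR.2 hR.1, add_zero]
  -- conclusion
  refine ⟨((LinearMap.quotKerEquivOfSurjective lamI' hsurj).symm.trans
    (Submodule.quotEquivOfEq _ _ hkerlam))⟩
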